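/- Let (Λ_k)_{k≥0} be an inverse system of abelian groups such that for all k, l ≥ 0 there are short exact sequences 0 → Λ_l →^{·p^k} Λ_{k+l} → Λ_k → 0 compatible with transition maps (the transition map Λ_{k+l} → Λ_k is the quotient map). Then Λ := lim_k Λ_k satisfies Λ/p^k Λ ≅ Λ_k for all k, and Λ is p-torsion-free. -/

import Mathlib

/-!
STATEMENT 11 (Lemma `l:et-cohom-Z/p^k-spectral-curve`.(4),(5)):
Let (Λ_k) be an inverse system of abelian groups with compatible short exact sequences
0 → Λ_l →^{·pᵏ} Λ_{k+l} → Λ_k → 0 (the transition map Λ_{k+l} → Λ_k being the quotient map).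
Then Λ := lim_k Λ_k satisfies Λ/pᵏΛ ≅ Λ_k for all k, and Λ is p-torsion-free.

Formalization: `t h : Λk n →+ Λk m` for `h : m ≤ n` are the (surjective, functorial)
transition maps, `μ k l : Λk l →+ Λk (k+l)` the injections, with Im(μ k l) = Ker(Λ_{k+l} → Λ_k)
(hker), and compatibilities `hcomp₁/₂` expressing that the two composites of μ and the
transition maps are multiplication by pᵏ (as on coefficients Z/pᵐ).  The limit is the subgroup
of compatible families f : ∀ m, Λk m.  Conclusions, for every k: the projection
Λ → Λ_k, f ↦ f k, is surjective (Mittag–Leffler) and its kernel is exactly pᵏ·Λ (so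
Λ/pᵏΛ ≅ Λ_k); and Λ is p-torsion-free.
-/

theorem limit_of_p_power_system_mod_p_and_torsionfree
    (p : ℕ) (hp : p.Prime)
    (Λk : ℕ → Type*) [∀ m, AddCommGroup (Λk m)]
    (t : ∀ {m n : ℕ}, m ≤ n → (Λk n →+ Λk m))
    (ht_refl : ∀ (m : ℕ) (x : Λk m), t (le_refl m) x = x)
    (ht_trans : ∀ {a b c : ℕ} (h1 : a ≤ b) (h2 : b ≤ c) (x : Λk c),
      t h1 (t h2 x) = t (h1.trans h2) x)
    (ht_surj : ∀ {m n : ℕ} (h : m ≤ n), Function.Surjective (t h))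
    (μ : ∀ k l : ℕ, Λk l →+ Λk (k + l))
    (hμ_inj : ∀ k l, Function.Injective (μ k l))
    (hker : ∀ (k l : ℕ) (x : Λk (k + l)),
      t (Nat.le_add_right k l) x = 0 ↔ ∃ z : Λk l, μ k l z = x)
    (hcomp₁ : ∀ (k l : ℕ) (x : Λk (k + l)),
      μ k l (t (Nat.le_add_left l k) x) = p ^ k • x)
    (hcomp₂ : ∀ (k l : ℕ) (z : Λk l),
      t (Nat.le_add_left l k) (μ k l z) = p ^ k • z) :
    (∀ k : ℕ,
      -- surjectivity of Λ = lim Λ_m → Λ_k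
      (∀ y : Λk k, ∃ f : ∀ m, Λk m,
        (∀ (m n : ℕ) (h : m ≤ n), t h (f n) = f m) ∧ f k = y) ∧
      -- the kernel of Λ → Λ_k is pᵏ·Λ, i.e. Λ/pᵏΛ ≅ Λ_k
      (∀ f : ∀ m, Λk m, (∀ (m n : ℕ) (h : m ≤ n), t h (f n) = f m) →
        (f k = 0 ↔ ∃ g : ∀ m, Λk m,
          (∀ (m n : ℕ) (h : m ≤ n), t h (g n) = g m) ∧ ∀ m, f m = p ^ k • g m))) ∧
    -- Λ is p-torsion-free
    (∀ f : ∀ m, Λk m, (∀ (m n : ℕ) (h : m ≤ n), t h (f n) = f m) →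
      (∀ m, p • f m = 0) → ∀ m, f m = 0) := by
  -- Λ_0 is trivial
  have h0 : ∀ x : Λk 0, x = 0 := by
    intro x
    have h1 := hcomp₁ 0 0 x
    simp only [pow_zero, one_smul] at h1
    have h2 := (hker 0 0 x).mpr ⟨_, h1⟩
    calc x = t (le_refl 0) x := (ht_refl 0 x).symm
    _ = 0 := h2
  -- Λ_k is killed by p ^ k
  have htor : ∀ (k : ℕ) (x : Λk k), p ^ k • x = 0 := by
    intro k x
    have h1 := hcomp₁ k 0 x
    rw [h0 (t (Nat.le_add_left 0 k) x), map_zero] at h1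
    exact h1.symm
  -- commutation of μ with transition maps
  have hcommut : ∀ (k m n : ℕ) (h : m ≤ n) (x : Λk n),
      μ k m (t h x) = t (Nat.add_le_add_left h k) (μ k n x) := by
    intro k m n h x
    obtain ⟨x', hx'⟩ := ht_surj (Nat.le_add_left n k) x
    have e1 : t h x = t (Nat.le_add_left m k) (t (Nat.add_le_add_left h k) x') := by
      rw [ht_trans, ← hx', ht_trans]
    rw [e1, hcomp₁ k m (t (Nat.add_le_add_left h k) x'), ← hx', hcomp₁ k n x', map_nsmul]
  refine ⟨fun k => ⟨?_, ?_⟩, ?_⟩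
  · -- surjectivity
    intro y
    -- build a tower of lifts above level k
    let g : ∀ n, Λk (k + n) := fun n =>
      Nat.rec y (fun n gn => (ht_surj (Nat.le_succ (k + n)) gn).choose) n
    have hg : ∀ n, t (Nat.le_succ (k + n)) (g (n + 1)) = g n := fun n =>
      (ht_surj (Nat.le_succ (k + n)) (g n)).choose_spec
    have hg' : ∀ (m n : ℕ) (h : m ≤ n), t (Nat.add_le_add_left h k) (g n) = g m := by
      intro m n h
      induction n with
      | zero =>
        have : m = 0 := Nat.le_zero.mp h
        subst this
        exact ht_refl _ _
      | succ n ih =>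
        rcases Nat.lt_or_ge m (n + 1) with hlt | hge
        · have hmn : m ≤ n := Nat.lt_succ_iff.mp hlt
          have e := ht_trans (Nat.add_le_add_left hmn k) (Nat.le_succ (k + n)) (g (n + 1))
          rw [hg n, ih hmn] at e
          exact e.symm
        · have : m = n + 1 := le_antisymm h hge
          subst this
          exact ht_refl _ _
    refine ⟨fun m => t (Nat.le_add_left m k) (g m), ?_, ?_⟩
    · intro m n h
      show t h (t (Nat.le_add_left n k) (g n)) = t (Nat.le_add_left m k) (g m)
      rw [ht_trans, ← hg' m n h, ht_trans]
    · have e := ht_trans (show k ≤ k + 0 from le_refl k)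
        (Nat.add_le_add_left (Nat.zero_le k) k) (g k)
      rw [hg' 0 k (Nat.zero_le k)] at e
      calc t (Nat.le_add_left k k) (g k)
          = t (le_refl k) (g 0) := by rw [ht_refl]; exact hg' 0 k (Nat.zero_le k)
        _ = y := ht_refl k (g 0)
  · -- kernel is p ^ k • Λ
    intro f hf
    constructor
    · intro hfk
      have hz : ∀ m, ∃ z : Λk m, μ k m z = f (k + m) := by
        intro m
        refine (hker k m (f (k + m))).mp ?_
        rw [hf k (k + m) (Nat.le_add_right k m), hfk]
      choose g hg using hz
      refine ⟨g, ?_, ?_⟩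
      · intro m n h
        apply hμ_inj k m
        rw [hcommut k m n h (g n), hg n, hg m, hf (k + m) (k + n) (Nat.add_le_add_left h k)]
      · intro m
        rw [← hf m (k + m) (Nat.le_add_left m k), ← hg m, hcomp₂ k m (g m)]
    · rintro ⟨g, hgc, hfg⟩
      rw [hfg k, htor k (g k)]
  · -- p-torsion-free
    intro f hf hpf m
    apply hμ_inj 1 m
    rw [map_zero, ← hf m (1 + m) (Nat.le_add_left m 1), hcomp₁ 1 m (f (1 + m)), pow_one,
      hpf (1 + m)]
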